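/- Let α ∈ R and σ₁, …, σ_n ∈ V⁰ with α + σ_r ∈ R for each r and α + τ ∈ R, where τ = σ₁ + ⋯ + σ_n. Set ẑ = t̂_α^{−τ} ∏_{r=1}^n t̂_α^{σ_r} (product in increasing order of r). Then ẑ² = ∏_{1 ≤ r < s ≤ n} [t̂_α^{σ_r}, t̂_α^{σ_s}]. -/

import Mathlib

/-- The reflection `s_α(u) = u - (u, α^∨) α` associated to a vector `α`, where
`α^∨ = 2α/(α,α)` and `B` is the bilinear form. -/
noncomputable def reflMap {V : Type*} [AddCommGroup V] [Module ℝ V] (B : V →ₗ[ℝ] V →ₗ[ℝ] ℝ)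
    (α : V) : V → V :=
  fun u => u - ((2 * B u α) / B α α) • α

/-- The defining relations of the presented group `Ŵ`: (I) `ŵ_α² = 1` and
(II) `ŵ_α ŵ_β ŵ_α = ŵ_{s_α(β)}` for `α, β ∈ R`. -/
def eawRels {V : Type*} [AddCommGroup V] [Module ℝ V] (B : V →ₗ[ℝ] V →ₗ[ℝ] ℝ)
    (R : Set V) : Set (FreeGroup R) :=
  {r | ∃ α : R, r = FreeGroup.of α * FreeGroup.of α} ∪
  {r | ∃ α β γ : R, (γ : V) = reflMap B (α : V) (β : V) ∧
        r = FreeGroup.of α * FreeGroup.of β * FreeGroup.of α * (FreeGroup.of γ)⁻¹}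

/-- The group `Ŵ` presented by generators `ŵ_α` (`α ∈ R`) and relations (I), (II). -/
abbrev EAW {V : Type*} [AddCommGroup V] [Module ℝ V] (B : V →ₗ[ℝ] V →ₗ[ℝ] ℝ)
    (R : Set V) :=
  PresentedGroup (eawRels B R)

/-- The generator `ŵ_α` of `Ŵ`. -/
def wgen {V : Type*} [AddCommGroup V] [Module ℝ V] (B : V →ₗ[ℝ] V →ₗ[ℝ] ℝ)
    (R : Set V) (α : V) (hα : α ∈ R) : EAW B R :=
  PresentedGroup.of (⟨α, hα⟩ : R)

/-- The element `t̂_α^σ = ŵ_{α+σ} ŵ_α` of `Ŵ`. -/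
def tgen {V : Type*} [AddCommGroup V] [Module ℝ V] (B : V →ₗ[ℝ] V →ₗ[ℝ] ℝ)
    (R : Set V) (α σ : V) (hα : α ∈ R) (hασ : α + σ ∈ R) : EAW B R :=
  wgen B R (α + σ) hασ * wgen B R α hα




namespace ZhatAux

variable {M : Type*} [AddCommGroup M] {G : Type*} [Group G]

/-- word product -/
def PW (u : M → G) (l : List M) : G := (l.map u).prod

structure USys (S : M → Prop) (u : M → G) : Prop where
  sq : ∀ x, u x * u x = 1
  braid : ∀ x y, S x → S y → u x * u y * u x = u (x + x - y)
  cl : ∀ x y, S x → S y → S (x + x - y)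
  zero : S 0

namespace USys

variable {S : M → Prop} {u : M → G} (h : USys S u)

set_option linter.unusedSectionVars false

theorem PW_append (l₁ l₂ : List M) : PW u (l₁ ++ l₂) = PW u l₁ * PW u l₂ := by
  simp [PW]

theorem PW_cons (x : M) (l : List M) : PW u (x :: l) = u x * PW u l := by
  simp [PW]

theorem PW_nil : PW u ([] : List M) = 1 := rfl

include h

theorem neg_mem {x : M} (hx : S x) : S (-x) := by
  have := h.cl 0 x h.zero hx
  simpa using this

theorem swapL {x y : M} (hx : S x) (hy : S y) :
    u x * u y = u (x + x - y) * u x := by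
  have hb := h.braid x y hx hy
  calc u x * u y = (u x * u y * u x) * u x := by
        rw [mul_assoc, h.sq x, mul_one]
    _ = u (x + x - y) * u x := by rw [hb]

theorem swapR {x y : M} (hx : S x) (hy : S y) :
    u x * u y = u y * u (y + y - x) := by
  have hb := h.braid y x hy hx
  calc u x * u y = u y * (u y * u x * u y) := by
        rw [← mul_assoc, ← mul_assoc, h.sq y, one_mul]
    _ = u y * u (y + y - x) := by rw [hb]

theorem lswapL (l₁ l₂ : List M) {x y : M} (hx : S x) (hy : S y) :
    PW u (l₁ ++ x :: y :: l₂) = PW u (l₁ ++ (x + x - y) :: x :: l₂) := by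
  rw [PW_append, PW_append, PW_cons, PW_cons, PW_cons, PW_cons,
    ← mul_assoc (u x), ← mul_assoc (u (x+x-y)), h.swapL hx hy]

theorem lswapR (l₁ l₂ : List M) {x y : M} (hx : S x) (hy : S y) :
    PW u (l₁ ++ x :: y :: l₂) = PW u (l₁ ++ y :: (y + y - x) :: l₂) := by
  rw [PW_append, PW_append, PW_cons, PW_cons, PW_cons, PW_cons,
    ← mul_assoc (u x), ← mul_assoc (u y), h.swapR hx hy]

theorem lcancel (l₁ l₂ : List M) (x : M) :
    PW u (l₁ ++ x :: x :: l₂) = PW u (l₁ ++ l₂) := by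
  rw [PW_append, PW_append, PW_cons, PW_cons, ← mul_assoc (u x), h.sq x, one_mul]

theorem lrot (l : List M) (x : M) (hr : PW u (l ++ [x]) = 1) :
    PW u (x :: l) = 1 := by
  rw [PW_append] at hr
  rw [PW_cons]
  have : PW u [x] * PW u l = 1 := by
    rw [mul_eq_one_iff_inv_eq] at *
    rw [← hr]
    simp
  simpa [PW] using this

theorem PW_rev_inv (l : List M) : PW u l * PW u l.reverse = 1 := by
  induction l with
  | nil => simp [PW]
  | cons x xs ih =>
      rw [PW_cons, List.reverse_cons, PW_append, ← mul_assoc, mul_assoc (u x), ih, mul_one]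
      simpa [PW] using h.sq x


theorem central {a b m : M} (ha : S a) (hb : S b) (hm : S m) :
    PW u [m, a, 0, b, a, 0, b, m, b, 0, a, b, 0, a] = 1 := by
  have g0 : S (a) := ha
  have g1 : S (b) := hb
  have g2 : S (m) := hm
  have g3 : S (0 : M) := h.zero
  have g4 : S (-a) := by have := h.cl _ _ g3 g0; rwa [show (0 : M) + (0 : M) - (a) = (-a) by abel] at this
  have g5 : S (-b) := by have := h.cl _ _ g3 g1; rwa [show (0 : M) + (0 : M) - (b) = (-b) by abel] at this
  have g6 : S (-m) := by have := h.cl _ _ g3 g2; rwa [show (0 : M) + (0 : M) - (m) = (-m) by abel] at this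
  have g7 : S ((-2 : ℤ) • a + m) := by have := h.cl _ _ g4 g6; rwa [show (-a) + (-a) - (-m) = ((-2 : ℤ) • a + m) by abel] at this
  have g8 : S ((-2 : ℤ) • b + m) := by have := h.cl _ _ g5 g6; rwa [show (-b) + (-b) - (-m) = ((-2 : ℤ) • b + m) by abel] at this
  have g9 : S ((2 : ℤ) • a + (2 : ℤ) • b + -m) := by have := h.cl _ _ g0 g8; rwa [show (a) + (a) - ((-2 : ℤ) • b + m) = ((2 : ℤ) • a + (2 : ℤ) • b + -m) by abel] at this
  have h35 : PW u ([] : List M) = 1 := rfl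
  have h34 : PW u ([(b), (b)] : List M) = 1 := by
    have e := h.lcancel (u := u) ([] : List M) ([]) (b)
    exact e.trans h35
  have h33 : PW u ([((-2 : ℤ) • a + m), ((-2 : ℤ) • a + m), (b), (b)] : List M) = 1 := by
    have e := h.lcancel (u := u) ([] : List M) ([(b), (b)]) ((-2 : ℤ) • a + m)
    exact e.trans h34
  have h32 : PW u ([((-2 : ℤ) • a + m), (b), ((2 : ℤ) • a + (2 : ℤ) • b + -m), (b)] : List M) = 1 := by
    have e := h.lswapL ([((-2 : ℤ) • a + m)] : List M) ([(b)]) g1 g9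
    rw [show (b) + (b) - ((2 : ℤ) • a + (2 : ℤ) • b + -m) = ((-2 : ℤ) • a + m) by abel] at e
    exact e.trans h33
  have h31 : PW u ([((-2 : ℤ) • a + m), (b), (a), (a), ((2 : ℤ) • a + (2 : ℤ) • b + -m), (b)] : List M) = 1 := by
    have e := h.lcancel (u := u) ([((-2 : ℤ) • a + m), (b)] : List M) ([((2 : ℤ) • a + (2 : ℤ) • b + -m), (b)]) (a)
    exact e.trans h32
  have h30 : PW u ([((-2 : ℤ) • a + m), (b), (a), ((-2 : ℤ) • b + m), (a), (b)] : List M) = 1 := by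
    have e := h.lswapR ([((-2 : ℤ) • a + m), (b), (a)] : List M) ([(b)]) g8 g0
    rw [show (a) + (a) - ((-2 : ℤ) • b + m) = ((2 : ℤ) • a + (2 : ℤ) • b + -m) by abel] at e
    exact e.trans h31
  have h29 : PW u ([((-2 : ℤ) • a + m), (b), (a), ((-2 : ℤ) • b + m), (-b), (-b), (a), (b)] : List M) = 1 := by
    have e := h.lcancel (u := u) ([((-2 : ℤ) • a + m), (b), (a), ((-2 : ℤ) • b + m)] : List M) ([(a), (b)]) (-b)
    exact e.trans h30
  have h28 : PW u ([((-2 : ℤ) • a + m), (b), (a), (-b), (-m), (-b), (a), (b)] : List M) = 1 := by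
    have e := h.lswapL ([((-2 : ℤ) • a + m), (b), (a)] : List M) ([(-b), (a), (b)]) g5 g6
    rw [show (-b) + (-b) - (-m) = ((-2 : ℤ) • b + m) by abel] at e
    exact e.trans h29
  have h27 : PW u ([((-2 : ℤ) • a + m), (-a), (-a), (b), (a), (-b), (-m), (-b), (a), (b)] : List M) = 1 := by
    have e := h.lcancel (u := u) ([((-2 : ℤ) • a + m)] : List M) ([(b), (a), (-b), (-m), (-b), (a), (b)]) (-a)
    exact e.trans h28
  have h26 : PW u ([(-a), (-m), (-a), (b), (a), (-b), (-m), (-b), (a), (b)] : List M) = 1 := by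
    have e := h.lswapL ([] : List M) ([(-a), (b), (a), (-b), (-m), (-b), (a), (b)]) g4 g6
    rw [show (-a) + (-a) - (-m) = ((-2 : ℤ) • a + m) by abel] at e
    exact e.trans h27
  have h25 : PW u ([(b), (-a), (-m), (-a), (b), (a), (-b), (-m), (-b), (a)] : List M) = 1 := by
    exact h.lrot _ _ h26
  have h24 : PW u ([(a), (b), (-a), (-m), (-a), (b), (a), (-b), (-m), (-b)] : List M) = 1 := by
    exact h.lrot _ _ h25
  have h23 : PW u ([(-b), (a), (b), (-a), (-m), (-a), (b), (a), (-b), (-m)] : List M) = 1 := by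
    exact h.lrot _ _ h24
  have h22 : PW u ([(-m), (-b), (a), (b), (-a), (-m), (-a), (b), (a), (-b)] : List M) = 1 := by
    exact h.lrot _ _ h23
  have h21 : PW u ([(-b), (-m), (-b), (a), (b), (-a), (-m), (-a), (b), (a)] : List M) = 1 := by
    exact h.lrot _ _ h22
  have h20 : PW u ([(a), (-b), (-m), (-b), (a), (b), (-a), (-m), (-a), (b)] : List M) = 1 := by
    exact h.lrot _ _ h21
  have h19 : PW u ([(b), (a), (-b), (-m), (-b), (a), (b), (-a), (-m), (-a)] : List M) = 1 := by
    exact h.lrot _ _ h20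
  have h18 : PW u ([(-a), (b), (a), (-b), (-m), (-b), (a), (b), (-a), (-m)] : List M) = 1 := by
    exact h.lrot _ _ h19
  have h17 : PW u ([(-a), (0 : M), (0 : M), (b), (a), (-b), (-m), (-b), (a), (b), (-a), (-m)] : List M) = 1 := by
    have e := h.lcancel (u := u) ([(-a)] : List M) ([(b), (a), (-b), (-m), (-b), (a), (b), (-a), (-m)]) (0 : M)
    exact e.trans h18
  have h16 : PW u ([(-a), (0 : M), (-b), (0 : M), (a), (-b), (-m), (-b), (a), (b), (-a), (-m)] : List M) = 1 := by
    have e := h.lswapR ([(-a), (0 : M)] : List M) ([(a), (-b), (-m), (-b), (a), (b), (-a), (-m)]) g5 g3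
    rw [show (0 : M) + (0 : M) - (-b) = (b) by abel] at e
    exact e.trans h17
  have h15 : PW u ([(-a), (0 : M), (-b), (-a), (0 : M), (-b), (-m), (-b), (a), (b), (-a), (-m)] : List M) = 1 := by
    have e := h.lswapR ([(-a), (0 : M), (-b)] : List M) ([(-b), (-m), (-b), (a), (b), (-a), (-m)]) g4 g3
    rw [show (0 : M) + (0 : M) - (-a) = (a) by abel] at e
    exact e.trans h16
  have h14 : PW u ([(-a), (0 : M), (-b), (-a), (0 : M), (-b), (-m), (-b), (0 : M), (0 : M), (a), (b), (-a), (-m)] : List M) = 1 := by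
    have e := h.lcancel (u := u) ([(-a), (0 : M), (-b), (-a), (0 : M), (-b), (-m), (-b)] : List M) ([(a), (b), (-a), (-m)]) (0 : M)
    exact e.trans h15
  have h13 : PW u ([(-a), (0 : M), (-b), (-a), (0 : M), (-b), (-m), (-b), (0 : M), (-a), (0 : M), (b), (-a), (-m)] : List M) = 1 := by
    have e := h.lswapR ([(-a), (0 : M), (-b), (-a), (0 : M), (-b), (-m), (-b), (0 : M)] : List M) ([(b), (-a), (-m)]) g4 g3
    rw [show (0 : M) + (0 : M) - (-a) = (a) by abel] at e
    exact e.trans h14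
  have h12 : PW u ([(-a), (0 : M), (-b), (-a), (0 : M), (-b), (-m), (-b), (0 : M), (-a), (-b), (0 : M), (-a), (-m)] : List M) = 1 := by
    have e := h.lswapR ([(-a), (0 : M), (-b), (-a), (0 : M), (-b), (-m), (-b), (0 : M), (-a)] : List M) ([(-a), (-m)]) g5 g3
    rw [show (0 : M) + (0 : M) - (-b) = (b) by abel] at e
    exact e.trans h13
  have h11 : PW u ([(-a), (0 : M), (-b), (-a), (0 : M), (-b), (-m), (-b), (0 : M), (-a), (-b), (a), (0 : M), (-m)] : List M) = 1 := by
    have e := h.lswapR ([(-a), (0 : M), (-b), (-a), (0 : M), (-b), (-m), (-b), (0 : M), (-a), (-b)] : List M) ([(-m)]) g0 g3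
    rw [show (0 : M) + (0 : M) - (a) = (-a) by abel] at e
    exact e.trans h12
  have h10 : PW u ([(-a), (0 : M), (-b), (-a), (0 : M), (-b), (-m), (-b), (0 : M), (-a), (-b), (a), (m), (0 : M)] : List M) = 1 := by
    have e := h.lswapR ([(-a), (0 : M), (-b), (-a), (0 : M), (-b), (-m), (-b), (0 : M), (-a), (-b), (a)] : List M) ([]) g2 g3
    rw [show (0 : M) + (0 : M) - (m) = (-m) by abel] at e
    exact e.trans h11
  have h9 : PW u ([(-a), (0 : M), (-b), (-a), (0 : M), (-b), (-m), (-b), (a), (0 : M), (-b), (a), (m), (0 : M)] : List M) = 1 := by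
    have e := h.lswapR ([(-a), (0 : M), (-b), (-a), (0 : M), (-b), (-m), (-b)] : List M) ([(-b), (a), (m), (0 : M)]) g0 g3
    rw [show (0 : M) + (0 : M) - (a) = (-a) by abel] at e
    exact e.trans h10
  have h8 : PW u ([(-a), (0 : M), (-b), (-a), (0 : M), (-b), (-m), (-b), (a), (b), (0 : M), (a), (m), (0 : M)] : List M) = 1 := by
    have e := h.lswapR ([(-a), (0 : M), (-b), (-a), (0 : M), (-b), (-m), (-b), (a)] : List M) ([(a), (m), (0 : M)]) g1 g3
    rw [show (0 : M) + (0 : M) - (b) = (-b) by abel] at e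
    exact e.trans h9
  have h7 : PW u ([(-a), (0 : M), (-b), (-a), (b), (0 : M), (-m), (-b), (a), (b), (0 : M), (a), (m), (0 : M)] : List M) = 1 := by
    have e := h.lswapR ([(-a), (0 : M), (-b), (-a)] : List M) ([(-m), (-b), (a), (b), (0 : M), (a), (m), (0 : M)]) g1 g3
    rw [show (0 : M) + (0 : M) - (b) = (-b) by abel] at e
    exact e.trans h8
  have h6 : PW u ([(-a), (0 : M), (-b), (-a), (b), (m), (0 : M), (-b), (a), (b), (0 : M), (a), (m), (0 : M)] : List M) = 1 := by
    have e := h.lswapR ([(-a), (0 : M), (-b), (-a), (b)] : List M) ([(-b), (a), (b), (0 : M), (a), (m), (0 : M)]) g2 g3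
    rw [show (0 : M) + (0 : M) - (m) = (-m) by abel] at e
    exact e.trans h7
  have h5 : PW u ([(-a), (0 : M), (-b), (-a), (b), (m), (b), (0 : M), (a), (b), (0 : M), (a), (m), (0 : M)] : List M) = 1 := by
    have e := h.lswapR ([(-a), (0 : M), (-b), (-a), (b), (m)] : List M) ([(a), (b), (0 : M), (a), (m), (0 : M)]) g1 g3
    rw [show (0 : M) + (0 : M) - (b) = (-b) by abel] at e
    exact e.trans h6
  have h4 : PW u ([(-a), (b), (0 : M), (-a), (b), (m), (b), (0 : M), (a), (b), (0 : M), (a), (m), (0 : M)] : List M) = 1 := by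
    have e := h.lswapR ([(-a)] : List M) ([(-a), (b), (m), (b), (0 : M), (a), (b), (0 : M), (a), (m), (0 : M)]) g1 g3
    rw [show (0 : M) + (0 : M) - (b) = (-b) by abel] at e
    exact e.trans h5
  have h3 : PW u ([(-a), (b), (a), (0 : M), (b), (m), (b), (0 : M), (a), (b), (0 : M), (a), (m), (0 : M)] : List M) = 1 := by
    have e := h.lswapR ([(-a), (b)] : List M) ([(b), (m), (b), (0 : M), (a), (b), (0 : M), (a), (m), (0 : M)]) g0 g3
    rw [show (0 : M) + (0 : M) - (a) = (-a) by abel] at e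
    exact e.trans h4
  have h2 : PW u ([(0 : M), (-a), (b), (a), (0 : M), (b), (m), (b), (0 : M), (a), (b), (0 : M), (a), (m)] : List M) = 1 := by
    exact h.lrot _ _ h3
  have h1 : PW u ([(m), (0 : M), (-a), (b), (a), (0 : M), (b), (m), (b), (0 : M), (a), (b), (0 : M), (a)] : List M) = 1 := by
    exact h.lrot _ _ h2
  have h0 : PW u ([(m), (a), (0 : M), (b), (a), (0 : M), (b), (m), (b), (0 : M), (a), (b), (0 : M), (a)] : List M) = 1 := by
    have e := h.lswapR ([(m)] : List M) ([(b), (a), (0 : M), (b), (m), (b), (0 : M), (a), (b), (0 : M), (a)]) g0 g3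
    rw [show (0 : M) + (0 : M) - (a) = (-a) by abel] at e
    exact e.trans h1
  exact h0

end USys

end ZhatAux

namespace ZhatAux

variable {M : Type*} [AddCommGroup M] {G : Type*} [Group G]

/-- translation element -/
def TT (u : M → G) (x : M) : G := u x * u 0

/-- commutator of translations -/
def cc (u : M → G) (x y : M) : G := (TT u x)⁻¹ * (TT u y)⁻¹ * TT u x * TT u y

/-- product of translations -/
def QT (u : M → G) (l : List M) : G := (l.map (TT u)).prod

end ZhatAux

namespace ZhatAux

section PairsQ

variable {M' : Type*} {G' : Type*} [Monoid G']

/-- lexicographic product of pairwise products of a pairing function -/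
def pairsQ (q : M' → M' → G') : List M' → G'
  | [] => 1
  | x :: xs => (xs.map (q x)).prod * pairsQ q xs

end PairsQ

end ZhatAux

namespace ZhatAux

variable {M : Type*} [AddCommGroup M] {G : Type*} [Group G]

theorem QT_cons (u : M → G) (x : M) (l : List M) :
    QT u (x :: l) = TT u x * QT u l := by simp [QT]

theorem QT_nil (u : M → G) : QT u ([] : List M) = 1 := rfl

namespace USys

variable {S : M → Prop} {u : M → G} (h : USys S u)

set_option linter.unusedSectionVars false

include h

theorem u_inv (x : M) : (u x)⁻¹ = u x := inv_eq_of_mul_eq_one_right (h.sq x)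

theorem comm_u_PW6 {a b m : M} (ha : S a) (hb : S b) (hm : S m) :
    u m * PW u [a, 0, b, a, 0, b] = PW u [a, 0, b, a, 0, b] * u m := by
  have hc := h.central ha hb hm
  have e1 : PW u [m, a, (0:M), b, a, 0, b, m, b, 0, a, b, 0, a] =
      u m * PW u [a, 0, b, a, 0, b] * (u m * PW u [b, 0, a, b, 0, a]) := by
    simp [PW, mul_assoc]
  rw [e1] at hc
  have hrev : PW u [a, (0:M), b, a, 0, b] * PW u [b, 0, a, b, 0, a] = 1 := by
    have := h.PW_rev_inv [a, (0:M), b, a, 0, b]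
    simpa using this
  have h2 : u m * PW u [a, (0:M), b, a, 0, b] * u m
      = (PW u [b, (0:M), a, b, 0, a])⁻¹ := by
    rw [← mul_assoc] at hc
    exact eq_inv_of_mul_eq_one_left hc
  have h3 : (PW u [b, (0:M), a, b, 0, a])⁻¹ = PW u [a, (0:M), b, a, 0, b] := by
    rw [eq_comm, eq_inv_iff_mul_eq_one]
    exact hrev
  rw [h3] at h2
  calc u m * PW u [a, (0:M), b, a, 0, b]
      = u m * PW u [a, (0:M), b, a, 0, b] * (u m * u m) := by rw [h.sq, mul_one]
    _ = (u m * PW u [a, (0:M), b, a, 0, b] * u m) * u m := by group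
    _ = PW u [a, (0:M), b, a, 0, b] * u m := by rw [h2]

theorem cc_eq {x y : M} (hx : S x) (hy : S y) :
    cc u x y = PW u [x, 0, y, x, 0, y] := by
  have e : cc u x y = u 0 * PW u [x, (0:M), y, x, 0, y] * u 0 := by
    simp only [cc, TT, PW, List.map_cons, List.map_nil, List.prod_cons, List.prod_nil,
      mul_inv_rev, h.u_inv, mul_one]
    group
  rw [e, h.comm_u_PW6 hx hy h.zero, mul_assoc, h.sq, mul_one]

theorem comm_u_cc {x y m : M} (hx : S x) (hy : S y) (hm : S m) :
    Commute (u m) (cc u x y) := by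
  rw [h.cc_eq hx hy]
  exact h.comm_u_PW6 hx hy hm

theorem comm_TT_cc {x y z : M} (hx : S x) (hy : S y) (hz : S z) :
    Commute (TT u z) (cc u x y) :=
  Commute.mul_left (h.comm_u_cc hx hy hz) (h.comm_u_cc hx hy h.zero)

theorem comm_QT_cc {x y : M} (hx : S x) (hy : S y) (l : List M) (hl : ∀ z ∈ l, S z) :
    Commute (QT u l) (cc u x y) := by
  apply Commute.list_prod_left
  intro g hg
  obtain ⟨z, hz, rfl⟩ := List.mem_map.1 hg
  exact h.comm_TT_cc hx hy (hl z hz)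

theorem comm_cc_cc {x y x' y' : M} (hx : S x) (hy : S y) (hx' : S x') (hy' : S y') :
    Commute (cc u x y) (cc u x' y') := by
  rw [h.cc_eq hx hy]
  apply Commute.list_prod_left
  intro g hg
  simp only [PW, List.map_cons, List.map_nil] at hg
  rcases List.mem_cons.1 hg with rfl | hg'
  · exact h.comm_u_cc hx' hy' hx
  rcases List.mem_cons.1 hg' with rfl | hg'
  · exact h.comm_u_cc hx' hy' h.zero
  rcases List.mem_cons.1 hg' with rfl | hg'
  · exact h.comm_u_cc hx' hy' hy
  rcases List.mem_cons.1 hg' with rfl | hg'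
  · exact h.comm_u_cc hx' hy' hx
  rcases List.mem_cons.1 hg' with rfl | hg'
  · exact h.comm_u_cc hx' hy' h.zero
  rcases List.mem_cons.1 hg' with rfl | hg'
  · exact h.comm_u_cc hx' hy' hy
  simp at hg'

theorem comm_ccList_cc {x y x' : M} (hx : S x) (hy : S y) (hx' : S x')
    (l : List M) (hl : ∀ z ∈ l, S z) :
    Commute ((l.map (cc u x')).prod) (cc u x y) := by
  apply Commute.list_prod_left
  intro g hg
  obtain ⟨z, hz, rfl⟩ := List.mem_map.1 hg
  exact h.comm_cc_cc hx' (hl z hz) hx hy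

theorem TT_zero : TT u 0 = 1 := by simp [TT, h.sq 0]

theorem TT_inv {x : M} (hx : S x) : (TT u x)⁻¹ = TT u (-x) := by
  symm
  rw [eq_inv_iff_mul_eq_one]
  calc TT u (-x) * TT u x = u (-x) * (u 0 * u x * u 0) := by
        simp only [TT]; group
    _ = u (-x) * u ((0:M) + 0 - x) := by rw [h.braid 0 x h.zero hx]
    _ = u (-x) * u (-x) := by rw [show (0:M) + 0 - x = -x by abel]
    _ = 1 := h.sq _

theorem TT_braid {x y : M} (hx : S x) (hy : S y) :
    TT u x * TT u y * TT u x = TT u (x + x + y) := by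
  have h1 : S ((0:M) + 0 - y) := h.cl 0 y h.zero hy
  calc TT u x * TT u y * TT u x
      = u x * (u 0 * u y * u 0) * u x * u 0 := by simp only [TT]; group
    _ = u x * u ((0:M) + 0 - y) * u x * u 0 := by rw [h.braid 0 y h.zero hy]
    _ = u (x + x - ((0:M) + 0 - y)) * u 0 := by rw [h.braid x _ hx h1]
    _ = TT u (x + x + y) := by rw [show x + x - ((0:M) + 0 - y) = x + x + y by abel]; rfl

theorem TT_swap {x y : M} (hx : S x) (hy : S y) :
    TT u x * TT u y = TT u (x + x + y) * TT u (-x) := by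
  rw [← h.TT_braid hx hy, ← h.TT_inv hx]
  group

theorem negswap {x y : M} (hx : S x) (hy : S y) :
    TT u (-y) * TT u x = TT u x * TT u (-y) * cc u x y := by
  have hc : Commute (TT u y) (cc u x y) := h.comm_TT_cc hx hy hy
  have e : TT u y * cc u x y * (TT u y)⁻¹ = cc u x y := by
    rw [hc.eq]; group
  rw [← h.TT_inv hy]
  calc (TT u y)⁻¹ * TT u x
      = TT u x * (TT u y)⁻¹ * (TT u y * cc u x y * (TT u y)⁻¹) := by
        simp only [cc]; group
    _ = TT u x * (TT u y)⁻¹ * cc u x y := by rw [e]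

end USys

end ZhatAux

namespace ZhatAux

namespace USys

variable {M : Type*} [AddCommGroup M] {G : Type*} [Group G]
variable {S : M → Prop} {u : M → G} (h : USys S u)

set_option linter.unusedSectionVars false

include h

theorem S_sum2 : ∀ (l : List M), (∀ z ∈ l, S z) → ∀ {x : M}, S x →
    S (l.sum + l.sum + x) := by
  intro l
  induction l with
  | nil => intro _ x hx; simpa using hx
  | cons σ l' ih =>
      intro hl x hx
      have hσ : S σ := hl σ List.mem_cons_self
      have hl' : ∀ z ∈ l', S z := fun z hz => hl z (List.mem_cons_of_mem _ hz)
      have h1 : S (l'.sum + l'.sum + x) := ih hl' hx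
      have h2 : S (-(l'.sum + l'.sum + x)) := h.neg_mem h1
      have h3 := h.cl σ _ hσ h2
      rw [show σ + σ - -(l'.sum + l'.sum + x)
          = (σ :: l').sum + (σ :: l').sum + x by simp [List.sum_cons]; abel] at h3
      exact h3

theorem step_lemma : ∀ (l : List M), (∀ z ∈ l, S z) → ∀ {x : M}, S x →
    QT u l * TT u x = TT u (l.sum + l.sum + x) * QT u (l.map Neg.neg) := by
  intro l
  induction l with
  | nil =>
      intro _ x hx
      simp [QT_nil, QT]
  | cons σ l' ih =>
      intro hl x hx
      have hσ : S σ := hl σ List.mem_cons_self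
      have hl' : ∀ z ∈ l', S z := fun z hz => hl z (List.mem_cons_of_mem _ hz)
      have hsx : S (l'.sum + l'.sum + x) := h.S_sum2 l' hl' hx
      calc QT u (σ :: l') * TT u x
          = TT u σ * (QT u l' * TT u x) := by rw [QT_cons, mul_assoc]
        _ = TT u σ * (TT u (l'.sum + l'.sum + x) * QT u (l'.map Neg.neg)) := by
            rw [ih hl' hx]
        _ = (TT u σ * TT u (l'.sum + l'.sum + x)) * QT u (l'.map Neg.neg) := by
            rw [mul_assoc]
        _ = (TT u (σ + σ + (l'.sum + l'.sum + x)) * TT u (-σ)) * QT u (l'.map Neg.neg) := by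
            rw [h.TT_swap hσ hsx]
        _ = TT u ((σ :: l').sum + (σ :: l').sum + x) * QT u ((σ :: l').map Neg.neg) := by
            rw [show σ + σ + (l'.sum + l'.sum + x)
              = (σ :: l').sum + (σ :: l').sum + x by simp [List.sum_cons]; abel]
            rw [List.map_cons, QT_cons, mul_assoc]

theorem swapkey : ∀ (xs : List M), (∀ z ∈ xs, S z) → ∀ {x : M}, S x →
    QT u (xs.map Neg.neg) * TT u x
      = TT u x * QT u (xs.map Neg.neg) * (xs.map (cc u x)).prod := by
  intro xs
  induction xs with
  | nil => intro _ x hx; simp [QT]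
  | cons y ys ih =>
      intro hl x hx
      have hy : S y := hl y List.mem_cons_self
      have hl' : ∀ z ∈ ys, S z := fun z hz => hl z (List.mem_cons_of_mem _ hz)
      have hnegys : ∀ z ∈ ys.map Neg.neg, S z := by
        intro z hz
        obtain ⟨w, hw, rfl⟩ := List.mem_map.1 hz
        exact h.neg_mem (hl' w hw)
      have hcq : Commute (cc u x y) (QT u (ys.map Neg.neg)) :=
        (h.comm_QT_cc hx hy _ hnegys).symm
      calc QT u ((y :: ys).map Neg.neg) * TT u x
          = TT u (-y) * (QT u (ys.map Neg.neg) * TT u x) := by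
            rw [List.map_cons, QT_cons, mul_assoc]
        _ = TT u (-y) * (TT u x * QT u (ys.map Neg.neg) * (ys.map (cc u x)).prod) := by
            rw [ih hl' hx]
        _ = (TT u (-y) * TT u x) * QT u (ys.map Neg.neg) * (ys.map (cc u x)).prod := by
            group
        _ = (TT u x * TT u (-y) * cc u x y) * QT u (ys.map Neg.neg)
              * (ys.map (cc u x)).prod := by rw [h.negswap hx hy]
        _ = TT u x * TT u (-y) * (cc u x y * QT u (ys.map Neg.neg))
              * (ys.map (cc u x)).prod := by group
        _ = TT u x * TT u (-y) * (QT u (ys.map Neg.neg) * cc u x y)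
              * (ys.map (cc u x)).prod := by rw [hcq.eq]
        _ = TT u x * QT u ((y :: ys).map Neg.neg) * ((y :: ys).map (cc u x)).prod := by
            rw [List.map_cons, QT_cons, List.map_cons, List.prod_cons]
            group

theorem key : ∀ (l : List M), (∀ z ∈ l, S z) →
    QT u (l.map Neg.neg) * QT u l = pairsQ (cc u) l := by
  intro l
  induction l with
  | nil => simp [QT, pairsQ]
  | cons x xs ih =>
      intro hl
      have hx : S x := hl x List.mem_cons_self
      have hl' : ∀ z ∈ xs, S z := fun z hz => hl z (List.mem_cons_of_mem _ hz)
      have hnegxs : ∀ z ∈ xs.map Neg.neg, S z := by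
        intro z hz
        obtain ⟨w, hw, rfl⟩ := List.mem_map.1 hz
        exact h.neg_mem (hl' w hw)
      have hcomm : Commute ((xs.map (cc u x)).prod) (QT u (xs.map Neg.neg)) := by
        apply Commute.list_prod_left
        intro g hg
        obtain ⟨z, hz, rfl⟩ := List.mem_map.1 hg
        exact ((h.comm_QT_cc hx (hl' z hz) _ hnegxs)).symm
      have hinv : TT u (-x) * TT u x = 1 := by
        rw [← h.TT_inv hx]; group
      calc QT u ((x :: xs).map Neg.neg) * QT u (x :: xs)
          = TT u (-x) * (QT u (xs.map Neg.neg) * TT u x) * QT u xs := by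
            rw [List.map_cons, QT_cons, QT_cons]; group
        _ = TT u (-x) * (TT u x * QT u (xs.map Neg.neg) * (xs.map (cc u x)).prod)
              * QT u xs := by rw [h.swapkey xs hl' hx]
        _ = (TT u (-x) * TT u x) * (QT u (xs.map Neg.neg) * (xs.map (cc u x)).prod)
              * QT u xs := by group
        _ = QT u (xs.map Neg.neg) * (xs.map (cc u x)).prod * QT u xs := by
            rw [hinv, one_mul]
        _ = (xs.map (cc u x)).prod * (QT u (xs.map Neg.neg) * QT u xs) := by
            rw [← hcomm.eq]; group
        _ = (xs.map (cc u x)).prod * pairsQ (cc u) xs := by rw [ih hl']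
        _ = pairsQ (cc u) (x :: xs) := rfl

theorem master (l : List M) (hl : ∀ z ∈ l, S z) (hs : S l.sum) :
    (TT u (-l.sum) * QT u l) ^ 2 = pairsQ (cc u) l := by
  have hns : S (-l.sum) := h.neg_mem hs
  have hstep := h.step_lemma l hl hns
  rw [show l.sum + l.sum + -l.sum = l.sum by abel] at hstep
  have hinv : TT u (-l.sum) * TT u l.sum = 1 := by
    rw [← h.TT_inv hs]; group
  calc (TT u (-l.sum) * QT u l) ^ 2
      = TT u (-l.sum) * (QT u l * TT u (-l.sum)) * QT u l := by
        rw [pow_two]; group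
    _ = TT u (-l.sum) * (TT u l.sum * QT u (l.map Neg.neg)) * QT u l := by
        rw [hstep]
    _ = (TT u (-l.sum) * TT u l.sum) * (QT u (l.map Neg.neg) * QT u l) := by group
    _ = QT u (l.map Neg.neg) * QT u l := by rw [hinv, one_mul]
    _ = pairsQ (cc u) l := h.key l hl

end USys

end ZhatAux

namespace ZhatAux

theorem prod_flatMap {α : Type*} {G : Type*} [Monoid G] (g : α → List G) :
    ∀ (l : List α), (l.flatMap g).prod = (l.map fun a => (g a).prod).prod
  | [] => by simp
  | x :: xs => by
      simp [List.flatMap_cons, List.prod_append, prod_flatMap g xs]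

theorem flat_pairs {M : Type*} {G : Type*} [Monoid G] (q : M → M → G) :
    ∀ (n : ℕ) (f : Fin n → M),
      ((List.finRange n).flatMap fun r =>
        (List.finRange n).map fun s => if r < s then q (f r) (f s) else 1).prod
      = pairsQ q (List.ofFn f) := by
  intro n
  induction n with
  | zero => intro f; simp [List.finRange_zero, pairsQ]
  | succ n ih =>
      intro f
      rw [prod_flatMap]
      rw [List.finRange_succ, List.map_cons, List.map_map, List.prod_cons]
      simp only [Function.comp_def]
      have e0 : (((0 : Fin (n+1)) :: List.map Fin.succ (List.finRange n)).map fun s =>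
            if (0 : Fin (n+1)) < s then q (f 0) (f s) else 1).prod
          = ((List.ofFn (fun i : Fin n => f i.succ)).map (q (f 0))).prod := by
        rw [List.map_cons, List.map_map, List.prod_cons,
          if_neg (lt_irrefl _), one_mul, List.map_ofFn, List.ofFn_eq_map]
        apply congrArg
        apply List.map_congr_left
        intro a _
        simp [Fin.succ_pos]
      have e1 : ((List.finRange n).map fun a =>
            (((0 : Fin (n+1)) :: List.map Fin.succ (List.finRange n)).map fun s =>
              if (Fin.succ a) < s then q (f a.succ) (f s) else 1).prod)
          = ((List.finRange n).map fun a =>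
            ((List.finRange n).map fun s =>
              if a < s then q (f a.succ) (f s.succ) else 1).prod) := by
        apply List.map_congr_left
        intro a _
        rw [List.map_cons, List.map_map, List.prod_cons,
          if_neg (Fin.not_lt_zero _), one_mul]
        apply congrArg
        apply List.map_congr_left
        intro s _
        simp [Fin.succ_lt_succ_iff]
      rw [e0, e1]
      have ih' := ih (fun i => f i.succ)
      rw [prod_flatMap] at ih'
      rw [ih', List.ofFn_succ]
      rfl

end ZhatAux

namespace ZhatAux

variable {V : Type*} [AddCommGroup V] [Module ℝ V]

theorem mk_rel_one {B : V →ₗ[ℝ] V →ₗ[ℝ] ℝ} {R : Set V} {r : FreeGroup R}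
    (hr : r ∈ eawRels B R) : PresentedGroup.mk (eawRels B R) r = 1 := by
  have : (QuotientGroup.mk r : PresentedGroup (eawRels B R)) = 1 := by
    rw [QuotientGroup.eq_one_iff]
    exact Subgroup.subset_normalClosure hr
  exact this

theorem wgen_sq (B : V →ₗ[ℝ] V →ₗ[ℝ] ℝ) (R : Set V) (β : V) (hβ : β ∈ R) :
    wgen B R β hβ * wgen B R β hβ = 1 := by
  have := mk_rel_one (B := B) (R := R)
    (r := FreeGroup.of (⟨β, hβ⟩ : R) * FreeGroup.of (⟨β, hβ⟩ : R))
    (Or.inl ⟨⟨β, hβ⟩, rfl⟩)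
  rw [map_mul] at this
  exact this

theorem wgen_braid (B : V →ₗ[ℝ] V →ₗ[ℝ] ℝ) (R : Set V) (β γ : V) (hβ : β ∈ R)
    (hγ : γ ∈ R) (hδ : reflMap B β γ ∈ R) :
    wgen B R β hβ * wgen B R γ hγ * wgen B R β hβ = wgen B R (reflMap B β γ) hδ := by
  have := mk_rel_one (B := B) (R := R)
    (r := FreeGroup.of (⟨β, hβ⟩ : R) * FreeGroup.of (⟨γ, hγ⟩ : R) *
      FreeGroup.of (⟨β, hβ⟩ : R) * (FreeGroup.of (⟨reflMap B β γ, hδ⟩ : R))⁻¹)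
    (Or.inr ⟨⟨β, hβ⟩, ⟨γ, hγ⟩, ⟨reflMap B β γ, hδ⟩, rfl, rfl⟩)
  rw [map_mul, map_mul, map_mul, map_inv] at this
  rw [mul_inv_eq_one] at this
  exact this

theorem wgen_congr (B : V →ₗ[ℝ] V →ₗ[ℝ] ℝ) (R : Set V) {β γ : V} (e : β = γ)
    (hβ : β ∈ R) : wgen B R β hβ = wgen B R γ (e ▸ hβ) := by
  subst e; rfl

section Geom

variable (B : V →ₗ[ℝ] V →ₗ[ℝ] ℝ) {R : Set V}
variable (hsym : ∀ u v : V, B u v = B v u)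
variable (hnon : ∀ α ∈ R, B α α ≠ 0)
variable (hclos : ∀ α ∈ R, ∀ β ∈ R, reflMap B α β ∈ R)

theorem reflMap_self {β : V} (hnz : B β β ≠ 0) : reflMap B β β = -β := by
  unfold reflMap
  rw [mul_div_assoc, div_self hnz, mul_one, two_smul]
  abel

include hnon hclos in
theorem mem_neg {β : V} (hβ : β ∈ R) : -β ∈ R := by
  have := hclos β hβ β hβ
  rwa [reflMap_self B (hnon β hβ)] at this

theorem reflMap_rad {α σ ρ : V} (hrσ : ∀ v, B σ v = 0) (hrρ : ∀ v, B ρ v = 0)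
    (hsym' : ∀ u v : V, B u v = B v u) (hnz : B α α ≠ 0) :
    reflMap B (α + σ) (α + ρ) = -(α + (σ + σ - ρ)) := by
  unfold reflMap
  have h1 : B (α + ρ) (α + σ) = B α α := by
    simp [map_add, LinearMap.add_apply, hrρ, hrσ, hsym' α σ]
  have h2 : B (α + σ) (α + σ) = B α α := by
    simp [map_add, LinearMap.add_apply, hrσ, hsym' α σ]
  rw [h1, h2, mul_div_assoc, div_self hnz, mul_one, two_smul]
  abel

end Geom

end ZhatAux

namespace ZhatAux

section Inst

variable {V : Type*} [AddCommGroup V] [Module ℝ V]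
variable (B : V →ₗ[ℝ] V →ₗ[ℝ] ℝ) (R : Set V) (α : V)

/-- membership-and-radical predicate -/
def Sg : V → Prop := fun σ => (α + σ ∈ R) ∧ ∀ v, B σ v = 0

open Classical in
noncomputable def ug : V → EAW B R := fun σ =>
  if h : α + σ ∈ R then wgen B R (α + σ) h else 1

theorem wgen_neg (hnon : ∀ α ∈ R, B α α ≠ 0)
    (hclos : ∀ α ∈ R, ∀ β ∈ R, reflMap B α β ∈ R)
    {β : V} (hβ : β ∈ R) (hnβ : -β ∈ R) :
    wgen B R (-β) hnβ = wgen B R β hβ := by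
  have h1 : wgen B R β hβ * wgen B R β hβ * wgen B R β hβ
      = wgen B R (reflMap B β β) (hclos β hβ β hβ) :=
    wgen_braid B R β β hβ hβ _
  rw [wgen_sq, one_mul] at h1
  rw [h1, wgen_congr B R (reflMap_self B (hnon β hβ)) (hclos β hβ β hβ)]

theorem usys (hsym : ∀ u v : V, B u v = B v u)
    (hnon : ∀ α ∈ R, B α α ≠ 0)
    (hclos : ∀ α ∈ R, ∀ β ∈ R, reflMap B α β ∈ R)
    (hα : α ∈ R) : USys (Sg B R α) (ug B R α) where
  sq x := by
    unfold ug
    split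
    · exact wgen_sq B R _ _
    · simp
  braid x y hx hy := by
    have hmx : α + x ∈ R := hx.1
    have hmy : α + y ∈ R := hy.1
    have hrefl : reflMap B (α + x) (α + y) = -(α + (x + x - y)) :=
      reflMap_rad B hx.2 hy.2 hsym (hnon α hα)
    have hmem2 : -(α + (x + x - y)) ∈ R := by
      rw [← hrefl]; exact hclos _ hmx _ hmy
    have hmem3 : α + (x + x - y) ∈ R := by
      have := mem_neg B hnon hclos hmem2
      rwa [neg_neg] at this
    show ug B R α x * ug B R α y * ug B R α x = ug B R α (x + x - y)
    unfold ug
    rw [dif_pos hmx, dif_pos hmy, dif_pos hmem3]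
    rw [wgen_braid B R _ _ hmx hmy (hclos _ hmx _ hmy)]
    rw [wgen_congr B R hrefl (hclos _ hmx _ hmy)]
    exact wgen_neg B R hnon hclos hmem3 hmem2
  cl x y hx hy := by
    have hmx : α + x ∈ R := hx.1
    have hmy : α + y ∈ R := hy.1
    have hrefl : reflMap B (α + x) (α + y) = -(α + (x + x - y)) :=
      reflMap_rad B hx.2 hy.2 hsym (hnon α hα)
    have hmem2 : -(α + (x + x - y)) ∈ R := by
      rw [← hrefl]; exact hclos _ hmx _ hmy
    have hmem3 : α + (x + x - y) ∈ R := by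
      have := mem_neg B hnon hclos hmem2
      rwa [neg_neg] at this
    refine ⟨hmem3, fun v => ?_⟩
    have e : B (x + x - y) = B x + B x - B y := by
      rw [map_sub, map_add]
    rw [e]
    simp [hx.2 v, hy.2 v]
  zero := ⟨by simpa using hα, fun v => by simp⟩

end Inst

end ZhatAux

/-- Let `α ∈ R` and `σ₁, …, σ_n` in the radical with `α + σ_r ∈ R` for each `r` and
`α + τ ∈ R`, where `τ = σ₁ + ⋯ + σ_n`.  Set `ẑ = t̂_α^{−τ} ∏ t̂_α^{σ_r}`.  Then
`ẑ² = ∏_{r < s} [t̂_α^{σ_r}, t̂_α^{σ_s}]`, with `[x,y] = x⁻¹y⁻¹xy` (the commutators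
being central, the order of the product over pairs `r < s` is immaterial; here it is
taken lexicographically). -/
theorem zhat_sq {V : Type*} [AddCommGroup V] [Module ℝ V]
    (B : V →ₗ[ℝ] V →ₗ[ℝ] ℝ) (R : Set V)
    (hsym : ∀ u v : V, B u v = B v u)
    (hpsd : ∀ v : V, 0 ≤ B v v)
    (hnon : ∀ α ∈ R, B α α ≠ 0)
    (hclos : ∀ α ∈ R, ∀ β ∈ R, reflMap B α β ∈ R)
    (α : V) (hα : α ∈ R) (n : ℕ) (σs : Fin n → V)
    (hσ : ∀ r : Fin n, ∀ u : V, B (σs r) u = 0)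
    (hmem : ∀ r : Fin n, α + σs r ∈ R)
    (hsum : α + ∑ r : Fin n, σs r ∈ R) :
    ∃ hns : α + -(∑ r : Fin n, σs r) ∈ R,
      (tgen B R α (-(∑ r : Fin n, σs r)) hα hns *
          (List.ofFn fun r : Fin n => tgen B R α (σs r) hα (hmem r)).prod) ^ 2 =
        ((List.finRange n).flatMap fun r =>
          (List.finRange n).map fun s =>
            if r < s then
              (tgen B R α (σs r) hα (hmem r))⁻¹ * (tgen B R α (σs s) hα (hmem s))⁻¹ *
                tgen B R α (σs r) hα (hmem r) * tgen B R α (σs s) hα (hmem s)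
            else 1).prod := by
  classical
  have husys : ZhatAux.USys (ZhatAux.Sg B R α) (ZhatAux.ug B R α) :=
    ZhatAux.usys B R α hsym hnon hclos hα
  have hradτ : ∀ v, B (∑ r : Fin n, σs r) v = 0 := by
    intro v
    rw [map_sum]
    simp [hσ]
  have hLgood : ∀ z ∈ List.ofFn σs, ZhatAux.Sg B R α z := by
    intro z hz
    rw [List.mem_ofFn] at hz
    obtain ⟨r, rfl⟩ := hz
    exact ⟨hmem r, hσ r⟩
  have hsums : (List.ofFn σs).sum = ∑ r : Fin n, σs r := List.sum_ofFn
  have hSsum : ZhatAux.Sg B R α ((List.ofFn σs).sum) := by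
    rw [hsums]; exact ⟨hsum, hradτ⟩
  have hSneg := husys.neg_mem hSsum
  have hns : α + -(∑ r : Fin n, σs r) ∈ R := by
    have := hSneg.1
    rwa [hsums] at this
  refine ⟨hns, ?_⟩
  have h0mem : α + (0 : V) ∈ R := by simpa using hα
  have tgen_eq : ∀ (σ : V) (hm : α + σ ∈ R),
      tgen B R α σ hα hm = ZhatAux.TT (ZhatAux.ug B R α) σ := by
    intro σ hm
    show wgen B R (α + σ) hm * wgen B R α hα
        = ZhatAux.ug B R α σ * ZhatAux.ug B R α 0
    unfold ZhatAux.ug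
    rw [dif_pos hm, dif_pos h0mem]
    congr 1
    exact (ZhatAux.wgen_congr B R (add_zero α) h0mem).symm
  have eL : tgen B R α (-(∑ r : Fin n, σs r)) hα hns
      = ZhatAux.TT (ZhatAux.ug B R α) (-(List.ofFn σs).sum) := by
    rw [tgen_eq _ hns, show -(∑ r : Fin n, σs r) = -((List.ofFn σs).sum) by
      rw [List.sum_ofFn]]
  have e2 : (List.ofFn fun r : Fin n => tgen B R α (σs r) hα (hmem r))
      = (List.ofFn σs).map (ZhatAux.TT (ZhatAux.ug B R α)) := by
    rw [List.map_ofFn]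
    exact congrArg List.ofFn (funext fun r => tgen_eq (σs r) (hmem r))
  have e5 : ((List.finRange n).flatMap fun r =>
        (List.finRange n).map fun s =>
          if r < s then
            (tgen B R α (σs r) hα (hmem r))⁻¹ * (tgen B R α (σs s) hα (hmem s))⁻¹ *
              tgen B R α (σs r) hα (hmem r) * tgen B R α (σs s) hα (hmem s)
          else 1)
      = ((List.finRange n).flatMap fun r =>
        (List.finRange n).map fun s =>
          if r < s then ZhatAux.cc (ZhatAux.ug B R α) (σs r) (σs s) else 1) := by
    apply List.flatMap_congr
    intro r _
    apply List.map_congr_left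
    intro s _
    by_cases hrs : r < s
    · rw [if_pos hrs, if_pos hrs, tgen_eq _ (hmem r), tgen_eq _ (hmem s)]
      rfl
    · rw [if_neg hrs, if_neg hrs]
  rw [eL, e2, e5, ZhatAux.flat_pairs (ZhatAux.cc (ZhatAux.ug B R α)) n σs]
  exact husys.master (List.ofFn σs) hLgood hSsum
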